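/- arXiv:1901.08191 — 10 statements merged into one kernel-verified Lean document; each statement's English description precedes it below -/
import Mathlib

section
/- Let ξ, μ, β be real numbers with ξ ≥ 2/3, μ ≥ 1 and β > 2/3, satisfying the key inequality: for every positive integer m with (m − 1 − 1/μ − 1/β)·ξ > 1 one has m·ξ ≥ ⌈(m − 1 − 1/μ − 1/β)·ξ⌉ + 2. Then ξ ≥ 4/5 and (6 − 1 − 1/μ − 1/β)·ξ > 2. -/
/-- Numerical core of Lemma 4.6 (lem:beta2): under the key inequality, from
`ξ ≥ 2/3`, `μ ≥ 1` and `β > 2/3` one deduces `ξ ≥ 4/5` and `α(6) > 2`. -/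
theorem stmt1 (ξ μ β : ℝ) (hξ : ξ ≥ 2 / 3) (hμ : μ ≥ 1) (hβ : β > 2 / 3)
    (key : ∀ m : ℕ, 0 < m → ((m : ℝ) - 1 - 1 / μ - 1 / β) * ξ > 1 →
      (m : ℝ) * ξ ≥ (⌈((m : ℝ) - 1 - 1 / μ - 1 / β) * ξ⌉ : ℝ) + 2) :
    ξ ≥ 4 / 5 ∧ (6 - 1 - 1 / μ - 1 / β) * ξ > 2 := by
  have hμ0 : (0:ℝ) < μ := lt_of_lt_of_le one_pos hμ
  have hβ0 : (0:ℝ) < β := lt_trans (by norm_num) hβ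
  have hinvμ : 1 / μ ≤ 1 := by
    rw [div_le_one hμ0]; exact hμ
  have hinvβ : 1 / β < 3 / 2 := by
    rw [div_lt_iff₀ hβ0]; nlinarith
  have hξ0 : (0:ℝ) < ξ := lt_of_lt_of_le (by norm_num) hξ
  have hc5 : ((5:ℝ) - 1 - 1 / μ - 1 / β) > 3 / 2 := by linarith
  have h5 : ((5:ℝ) - 1 - 1 / μ - 1 / β) * ξ > 1 := by nlinarith
  have hkey5 := key 5 (by norm_num) (by push_cast; exact h5)
  have hceil : (2:ℤ) ≤ ⌈((5:ℝ) - 1 - 1 / μ - 1 / β) * ξ⌉ := by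
    have : (1:ℤ) < ⌈((5:ℝ) - 1 - 1 / μ - 1 / β) * ξ⌉ := by
      rw [Int.lt_ceil]; exact_mod_cast h5
    omega
  have hceil' : (2:ℝ) ≤ (⌈((5:ℝ) - 1 - 1 / μ - 1 / β) * ξ⌉ : ℝ) := by exact_mod_cast hceil
  push_cast at hkey5
  have hξ45 : ξ ≥ 4 / 5 := by linarith
  refine ⟨hξ45, ?_⟩
  nlinarith
end

section
/- Let ξ, μ, β be real numbers with ξ ≥ 2/3, μ > 4/3 and β ≥ 4/7, satisfying the key inequality: for every positive integer m with (m − 1 − 1/μ − 1/β)·ξ > 1 one has m·ξ ≥ ⌈(m − 1 − 1/μ − 1/β)·ξ⌉ + 2. Then ξ ≥ 4/5 and (6 − 1 − 1/μ − 1/β)·ξ > 2. -/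
/-- Numerical core of Lemma 4.7 (lem:zeta): under the key inequality, from
`ξ ≥ 2/3`, `μ > 4/3` and `β ≥ 4/7` one deduces `ξ ≥ 4/5` and `α(6) > 2`. -/
theorem stmt2 (ξ μ β : ℝ) (hξ : ξ ≥ 2 / 3) (hμ : μ > 4 / 3) (hβ : β ≥ 4 / 7)
    (key : ∀ m : ℕ, 0 < m → ((m : ℝ) - 1 - 1 / μ - 1 / β) * ξ > 1 →
      (m : ℝ) * ξ ≥ (⌈((m : ℝ) - 1 - 1 / μ - 1 / β) * ξ⌉ : ℝ) + 2) :
    ξ ≥ 4 / 5 ∧ (6 - 1 - 1 / μ - 1 / β) * ξ > 2 := by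
  have hμ0 : (0:ℝ) < μ := by linarith
  have hβ0 : (0:ℝ) < β := by linarith
  have hμi : 1 / μ < 3 / 4 := by
    rw [div_lt_div_iff₀ hμ0 (by norm_num)]; linarith
  have hβi : 1 / β ≤ 7 / 4 := by
    rw [div_le_div_iff₀ hβ0 (by norm_num)]; linarith
  have hξ0 : (0:ℝ) < ξ := by linarith
  have h5 : ((5:ℝ) - 1 - 1 / μ - 1 / β) * ξ > 1 := by
    have : (3:ℝ)/2 < 5 - 1 - 1 / μ - 1 / β := by linarith
    nlinarith
  have hk := key 5 (by norm_num) (by push_cast; exact h5)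
  push_cast at hk
  have hceil : (2:ℝ) ≤ (⌈((5:ℝ) - 1 - 1 / μ - 1 / β) * ξ⌉ : ℝ) := by
    have : (1:ℤ) < ⌈((5:ℝ) - 1 - 1 / μ - 1 / β) * ξ⌉ := by
      rw [Int.lt_ceil]; exact_mod_cast h5
    exact_mod_cast this
  have hξ45 : ξ ≥ 4 / 5 := by linarith
  refine ⟨hξ45, ?_⟩
  have h52 : (5:ℝ)/2 < 6 - 1 - 1 / μ - 1 / β := by linarith
  nlinarith
end

section
/- Let ξ, μ, β be real numbers with ξ > 2/3, μ ≥ 1 and β ≥ 1/2, satisfying the key inequality: for every positive integer m with (m − 1 − 1/μ − 1/β)·ξ > 1 one has m·ξ ≥ ⌈(m − 1 − 1/μ − 1/β)·ξ⌉ + 2. Then ξ ≥ 5/7. -/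
/-- Opening numerical step of Proposition 4.14: under the key inequality, from
`ξ > 2/3`, `μ ≥ 1` and `β ≥ 1/2` one deduces `ξ ≥ 5/7`. -/
theorem stmt3 (ξ μ β : ℝ) (hξ : ξ > 2 / 3) (hμ : μ ≥ 1) (hβ : β ≥ 1 / 2)
    (key : ∀ m : ℕ, 0 < m → ((m : ℝ) - 1 - 1 / μ - 1 / β) * ξ > 1 →
      (m : ℝ) * ξ ≥ (⌈((m : ℝ) - 1 - 1 / μ - 1 / β) * ξ⌉ : ℝ) + 2) :
    ξ ≥ 5 / 7 := by
  have hμ0 : (0:ℝ) < μ := lt_of_lt_of_le one_pos hμ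
  have hβ0 : (0:ℝ) < β := lt_of_lt_of_le (by norm_num) hβ
  have h1μ : 1 / μ ≤ 1 := by
    rw [div_le_one hμ0]; exact hμ
  have h1β : 1 / β ≤ 2 := by
    rw [div_le_iff₀ hβ0]; linarith
  have hξ0 : (0:ℝ) < ξ := by linarith
  have ha : (3:ℝ) ≤ ((7:ℕ):ℝ) - 1 - 1 / μ - 1 / β := by push_cast; linarith
  have hα : (((7:ℕ):ℝ) - 1 - 1 / μ - 1 / β) * ξ > 2 := by
    calc (2:ℝ) < 3 * ξ := by linarith
    _ ≤ (((7:ℕ):ℝ) - 1 - 1 / μ - 1 / β) * ξ := by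
        apply mul_le_mul_of_nonneg_right ha hξ0.le
  have h := key 7 (by norm_num) (by linarith)
  have hc : (2:ℤ) < ⌈(((7:ℕ):ℝ) - 1 - 1 / μ - 1 / β) * ξ⌉ := by
    rw [Int.lt_ceil]; exact_mod_cast hα
  have hc3 : ((3:ℤ):ℝ) ≤ (⌈(((7:ℕ):ℝ) - 1 - 1 / μ - 1 / β) * ξ⌉ : ℝ) := by
    exact_mod_cast hc
  push_cast at h hc3
  linarith
end

section
/- Let ξ, μ, β be real numbers with ξ ≥ 2/3, μ ≥ 1 and β ≥ 4/7, satisfying the key inequality: for every positive integer m with (m − 1 − 1/μ − 1/β)·ξ > 1 one has m·ξ ≥ ⌈(m − 1 − 1/μ − 1/β)·ξ⌉ + 2. Then ξ ≥ 3/4. -/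
/-- Two-step bootstrap used in Propositions 4.11, 4.13 and 4.14: under the key
inequality, from `ξ ≥ 2/3`, `μ ≥ 1` and `β ≥ 4/7` one deduces `ξ ≥ 3/4`. -/
theorem stmt4 (ξ μ β : ℝ) (hξ : ξ ≥ 2 / 3) (hμ : μ ≥ 1) (hβ : β ≥ 4 / 7)
    (key : ∀ m : ℕ, 0 < m → ((m : ℝ) - 1 - 1 / μ - 1 / β) * ξ > 1 →
      (m : ℝ) * ξ ≥ (⌈((m : ℝ) - 1 - 1 / μ - 1 / β) * ξ⌉ : ℝ) + 2) :
    ξ ≥ 3 / 4 := by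
  have hμ0 : (0:ℝ) < μ := by linarith
  have hβ0 : (0:ℝ) < β := by linarith
  have h1μ : 1/μ ≤ 1 := by rw [div_le_one hμ0]; linarith
  have h1β : 1/β ≤ 7/4 := by rw [div_le_iff₀ hβ0]; linarith
  have hξ0 : (0:ℝ) < ξ := by linarith
  -- Step 1: m = 7
  have hc7 : ((7:ℕ):ℝ) - 1 - 1/μ - 1/β ≥ 13/4 := by push_cast; linarith
  have hα7 : (((7:ℕ):ℝ) - 1 - 1/μ - 1/β) * ξ > 2 := by nlinarith
  have k7 := key 7 (by norm_num) (by linarith)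
  have hceil7 : ((3:ℤ):ℝ) ≤ (⌈(((7:ℕ):ℝ) - 1 - 1/μ - 1/β) * ξ⌉ : ℝ) := by
    have : (2:ℤ) < ⌈(((7:ℕ):ℝ) - 1 - 1/μ - 1/β) * ξ⌉ := by
      rw [Int.lt_ceil]; push_cast; linarith
    exact_mod_cast this
  have hξ57 : ξ ≥ 5/7 := by
    have : ((7:ℕ):ℝ) * ξ ≥ 5 := by push_cast at hceil7 k7 ⊢; linarith
    push_cast at this; linarith
  -- Step 2: m = 8
  have hc8 : ((8:ℕ):ℝ) - 1 - 1/μ - 1/β ≥ 17/4 := by push_cast; linarith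
  have hα8 : (((8:ℕ):ℝ) - 1 - 1/μ - 1/β) * ξ > 3 := by nlinarith
  have k8 := key 8 (by norm_num) (by linarith)
  have hceil8 : ((4:ℤ):ℝ) ≤ (⌈(((8:ℕ):ℝ) - 1 - 1/μ - 1/β) * ξ⌉ : ℝ) := by
    have : (3:ℤ) < ⌈(((8:ℕ):ℝ) - 1 - 1/μ - 1/β) * ξ⌉ := by
      rw [Int.lt_ceil]; push_cast; linarith
    exact_mod_cast this
  have : ((8:ℕ):ℝ) * ξ ≥ 6 := by push_cast at hceil8 k8 ⊢; linarith
  push_cast at this; linarith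
end

section
/- Let ξ, μ, β be real numbers with ξ ≥ 2/3, μ ≥ 7/6 and β ≥ 6/11, satisfying the key inequality: for every positive integer m with (m − 1 − 1/μ − 1/β)·ξ > 1 one has m·ξ ≥ ⌈(m − 1 − 1/μ − 1/β)·ξ⌉ + 2. Then ξ ≥ 3/4 and μ·β·ξ ≥ 21/44 > 0.4772. -/
/-- Numerical content of case (4.2) in the proof of Proposition 4.14: under the
key inequality, from `ξ ≥ 2/3`, `μ ≥ 7/6` and `β ≥ 6/11` one deduces `ξ ≥ 3/4`
and `μ * β * ξ ≥ 21/44 > 0.4772`. -/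
theorem stmt5 (ξ μ β : ℝ) (hξ : ξ ≥ 2 / 3) (hμ : μ ≥ 7 / 6) (hβ : β ≥ 6 / 11)
    (key : ∀ m : ℕ, 0 < m → ((m : ℝ) - 1 - 1 / μ - 1 / β) * ξ > 1 →
      (m : ℝ) * ξ ≥ (⌈((m : ℝ) - 1 - 1 / μ - 1 / β) * ξ⌉ : ℝ) + 2) :
    ξ ≥ 3 / 4 ∧ μ * β * ξ ≥ 21 / 44 ∧ (21 : ℝ) / 44 > 0.4772 := by
  have hμ0 : (0:ℝ) < μ := by linarith
  have hβ0 : (0:ℝ) < β := by linarith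
  have hμi : 1 / μ ≤ 6 / 7 := by
    rw [div_le_div_iff₀ hμ0 (by norm_num)]; linarith
  have hβi : 1 / β ≤ 11 / 6 := by
    rw [div_le_div_iff₀ hβ0 (by norm_num)]; linarith
  have hξ0 : (0:ℝ) < ξ := by linarith
  -- m = 7
  have h7x : (((7:ℕ):ℝ) - 1 - 1 / μ - 1 / β) * ξ > 2 := by
    have h1 : ((7:ℕ):ℝ) - 1 - 1 / μ - 1 / β ≥ 139 / 42 := by push_cast; linarith
    nlinarith
  have h7 := key 7 (by norm_num) (by linarith)
  have hc7 : (3:ℝ) ≤ (⌈(((7:ℕ):ℝ) - 1 - 1 / μ - 1 / β) * ξ⌉ : ℝ) := by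
    have : (2:ℤ) < ⌈(((7:ℕ):ℝ) - 1 - 1 / μ - 1 / β) * ξ⌉ :=
      Int.lt_ceil.mpr (by exact_mod_cast h7x)
    exact_mod_cast this
  have hξ57 : ξ ≥ 5 / 7 := by
    push_cast at h7; linarith
  -- m = 8
  have h8x : (((8:ℕ):ℝ) - 1 - 1 / μ - 1 / β) * ξ > 3 := by
    have h1 : ((8:ℕ):ℝ) - 1 - 1 / μ - 1 / β ≥ 181 / 42 := by push_cast; linarith
    nlinarith
  have h8 := key 8 (by norm_num) (by linarith)
  have hc8 : (4:ℝ) ≤ (⌈(((8:ℕ):ℝ) - 1 - 1 / μ - 1 / β) * ξ⌉ : ℝ) := by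
    have : (3:ℤ) < ⌈(((8:ℕ):ℝ) - 1 - 1 / μ - 1 / β) * ξ⌉ :=
      Int.lt_ceil.mpr (by exact_mod_cast h8x)
    exact_mod_cast this
  have hξ34 : ξ ≥ 3 / 4 := by
    push_cast at h8; linarith
  refine ⟨hξ34, ?_, by norm_num⟩
  nlinarith [mul_pos hμ0 hβ0, mul_nonneg (sub_nonneg.mpr hμ) (sub_nonneg.mpr hβ)]
end

section
/- Let ξ, μ, β be real numbers with ξ ≥ 2/3, μ ≥ 6/5 and β ≥ 2/3, satisfying the key inequality: for every positive integer m with (m − 1 − 1/μ − 1/β)·ξ > 1 one has m·ξ ≥ ⌈(m − 1 − 1/μ − 1/β)·ξ⌉ + 2. Then ξ ≥ 4/5 and (6 − 1 − 1/μ − 1/β)·ξ > 2. -/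
/-- Numerical argument in case (iii) of the second part of the proof of
Proposition 4.12: under the key inequality, from `ξ ≥ 2/3`, `μ ≥ 6/5` and
`β ≥ 2/3` one deduces `ξ ≥ 4/5` and `α(6) > 2`. -/
theorem stmt6 (ξ μ β : ℝ) (hξ : ξ ≥ 2 / 3) (hμ : μ ≥ 6 / 5) (hβ : β ≥ 2 / 3)
    (key : ∀ m : ℕ, 0 < m → ((m : ℝ) - 1 - 1 / μ - 1 / β) * ξ > 1 →
      (m : ℝ) * ξ ≥ (⌈((m : ℝ) - 1 - 1 / μ - 1 / β) * ξ⌉ : ℝ) + 2) :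
    ξ ≥ 4 / 5 ∧ (6 - 1 - 1 / μ - 1 / β) * ξ > 2 := by
  have hμ0 : (0:ℝ) < μ := by linarith
  have hβ0 : (0:ℝ) < β := by linarith
  have ha : 1/μ ≤ 5/6 := by rw [div_le_div_iff₀ hμ0 (by norm_num)]; linarith
  have hb : 1/β ≤ 3/2 := by rw [div_le_div_iff₀ hβ0 (by norm_num)]; linarith
  -- m = 7
  have h7c : (((7:ℕ):ℝ) - 1 - 1/μ - 1/β) * ξ > 2 := by push_cast; nlinarith
  have h7 := key 7 (by norm_num) (by linarith)
  have hc7 : (2:ℤ) < ⌈(((7:ℕ):ℝ) - 1 - 1/μ - 1/β) * ξ⌉ := Int.lt_ceil.mpr (by exact_mod_cast h7c)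
  have hc7' : (3:ℝ) ≤ (⌈(((7:ℕ):ℝ) - 1 - 1/μ - 1/β) * ξ⌉ : ℝ) := by exact_mod_cast hc7
  have hξ57 : ξ ≥ 5/7 := by push_cast at h7; linarith
  -- m = 5
  have h5c : (((5:ℕ):ℝ) - 1 - 1/μ - 1/β) * ξ > 1 := by push_cast; nlinarith
  have h5 := key 5 (by norm_num) h5c
  have hc5 : (1:ℤ) < ⌈(((5:ℕ):ℝ) - 1 - 1/μ - 1/β) * ξ⌉ := Int.lt_ceil.mpr (by exact_mod_cast h5c)
  have hc5' : (2:ℝ) ≤ (⌈(((5:ℕ):ℝ) - 1 - 1/μ - 1/β) * ξ⌉ : ℝ) := by exact_mod_cast hc5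
  have hξ45 : ξ ≥ 4/5 := by push_cast at h5; linarith
  exact ⟨hξ45, by nlinarith⟩
end

section
/- Let ξ, μ, β be real numbers with ξ > 2/3, μ ≥ 4/3 and β ≥ 4/7, satisfying the key inequality: for every positive integer m with (m − 1 − 1/μ − 1/β)·ξ > 1 one has m·ξ ≥ ⌈(m − 1 − 1/μ − 1/β)·ξ⌉ + 2. Then ξ ≥ 4/5; moreover, if in addition ξ > 4/5, then (6 − 1 − 1/μ − 1/β)·ξ > 2. -/
/-- Numerical argument of Case iii in the proof of Proposition 4.13 and of
cases (3.3), (4.4), (5.2) of Proposition 4.14: under the key inequality, from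
`ξ > 2/3`, `μ ≥ 4/3` and `β ≥ 4/7` one deduces `ξ ≥ 4/5`; moreover if
`ξ > 4/5`, then `α(6) > 2`. -/
theorem stmt7 (ξ μ β : ℝ) (hξ : ξ > 2 / 3) (hμ : μ ≥ 4 / 3) (hβ : β ≥ 4 / 7)
    (key : ∀ m : ℕ, 0 < m → ((m : ℝ) - 1 - 1 / μ - 1 / β) * ξ > 1 →
      (m : ℝ) * ξ ≥ (⌈((m : ℝ) - 1 - 1 / μ - 1 / β) * ξ⌉ : ℝ) + 2) :
    ξ ≥ 4 / 5 ∧ (ξ > 4 / 5 → (6 - 1 - 1 / μ - 1 / β) * ξ > 2) := by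
  have hμ0 : (0:ℝ) < μ := by linarith
  have hβ0 : (0:ℝ) < β := by linarith
  have h1 : 1 / μ ≤ 3 / 4 := by
    rw [div_le_iff₀ hμ0]; nlinarith
  have h2 : 1 / β ≤ 7 / 4 := by
    rw [div_le_iff₀ hβ0]; nlinarith
  have hξ0 : (0:ℝ) < ξ := by linarith
  -- helper: ceiling lower bound
  have ceil_ge : ∀ (y : ℝ) (n : ℤ), (n:ℝ) - 1 < y → (n:ℝ) ≤ (⌈y⌉ : ℝ) := by
    intro y n h
    have h' : n - 1 < ⌈y⌉ := Int.lt_ceil.mpr (by push_cast; linarith)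
    have h'' : n ≤ ⌈y⌉ := by omega
    exact_mod_cast h''
  -- step m = 7 : ξ ≥ 5/7
  have s7 : ξ ≥ 5 / 7 := by
    have hx : ((7:ℕ):ℝ) - 1 - 1 / μ - 1 / β ≥ 7/2 := by push_cast; linarith
    have hprod : (7/2 : ℝ) * (2/3) ≤ (((7:ℕ):ℝ) - 1 - 1 / μ - 1 / β) * ξ :=
      mul_le_mul hx (le_of_lt hξ) (by norm_num) (by linarith)
    have hk := key 7 (by norm_num) (by linarith)
    have hc := ceil_ge ((((7:ℕ):ℝ) - 1 - 1 / μ - 1 / β) * ξ) 3 (by push_cast; linarith)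
    push_cast at hk hc
    linarith
  -- step m = 8 : ξ ≥ 3/4
  have s8 : ξ ≥ 3 / 4 := by
    have hx : ((8:ℕ):ℝ) - 1 - 1 / μ - 1 / β ≥ 9/2 := by push_cast; linarith
    have hprod : (9/2 : ℝ) * (5/7) ≤ (((8:ℕ):ℝ) - 1 - 1 / μ - 1 / β) * ξ :=
      mul_le_mul hx s7 (by norm_num) (by linarith)
    have hk := key 8 (by norm_num) (by linarith)
    have hc := ceil_ge ((((8:ℕ):ℝ) - 1 - 1 / μ - 1 / β) * ξ) 4 (by push_cast; linarith)
    push_cast at hk hc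
    linarith
  -- step m = 9 : ξ ≥ 7/9
  have s9 : ξ ≥ 7 / 9 := by
    have hx : ((9:ℕ):ℝ) - 1 - 1 / μ - 1 / β ≥ 11/2 := by push_cast; linarith
    have hprod : (11/2 : ℝ) * (3/4) ≤ (((9:ℕ):ℝ) - 1 - 1 / μ - 1 / β) * ξ :=
      mul_le_mul hx s8 (by norm_num) (by linarith)
    have hk := key 9 (by norm_num) (by linarith)
    have hc := ceil_ge ((((9:ℕ):ℝ) - 1 - 1 / μ - 1 / β) * ξ) 5 (by push_cast; linarith)
    push_cast at hk hc
    linarith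
  -- step m = 10 : ξ ≥ 4/5
  have s10 : ξ ≥ 4 / 5 := by
    have hx : ((10:ℕ):ℝ) - 1 - 1 / μ - 1 / β ≥ 13/2 := by push_cast; linarith
    have hprod : (13/2 : ℝ) * (7/9) ≤ (((10:ℕ):ℝ) - 1 - 1 / μ - 1 / β) * ξ :=
      mul_le_mul hx s9 (by norm_num) (by linarith)
    have hk := key 10 (by norm_num) (by linarith)
    have hc := ceil_ge ((((10:ℕ):ℝ) - 1 - 1 / μ - 1 / β) * ξ) 6 (by push_cast; linarith)
    push_cast at hk hc
    linarith
  refine ⟨s10, fun h5 => ?_⟩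
  have hx : (6:ℝ) - 1 - 1 / μ - 1 / β ≥ 5/2 := by linarith
  have hprod : (5/2 : ℝ) * (4/5) ≤ ((6:ℝ) - 1 - 1 / μ - 1 / β) * ξ :=
    mul_le_mul hx (le_of_lt h5) (by norm_num) (by linarith)
  have : (5/2 : ℝ) * (4/5) < ((6:ℝ) - 1 - 1 / μ - 1 / β) * ξ := by
    apply mul_lt_mul' hx h5 (by norm_num) (by linarith)
  linarith
end

section
/- Let ξ be a real number with ξ ≥ 2/3 such that for every integer n ≥ 6 one has (n + 1)·ξ ≥ ⌈(n − 5)·ξ⌉ + 4, where ⌈·⌉ denotes the ceiling function. Then ξ ≥ 4/5; moreover, if ξ > 4/5, then ξ ≥ 9/11. -/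
lemma ceil_ge_of_lt (x : ℝ) (k : ℤ) (h : (k : ℝ) - 1 < x) : (k : ℝ) ≤ (⌈x⌉ : ℝ) := by
  have h1 : k - 1 < ⌈x⌉ := Int.lt_ceil.mpr (by push_cast; linarith)
  have h2 : k ≤ ⌈x⌉ := by omega
  exact_mod_cast h2

/-- Numerical content of Case V of the proof of Proposition 4.14: if `ξ ≥ 2/3`
and `(n + 1) * ξ ≥ ⌈(n − 5) * ξ⌉ + 4` for every integer `n ≥ 6`, then
`ξ ≥ 4/5`, and if moreover `ξ > 4/5`, then `ξ ≥ 9/11`. -/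
theorem stmt8 (ξ : ℝ) (hξ : ξ ≥ 2 / 3)
    (key : ∀ n : ℕ, 6 ≤ n →
      ((n : ℝ) + 1) * ξ ≥ (⌈((n : ℝ) - 5) * ξ⌉ : ℝ) + 4) :
    ξ ≥ 4 / 5 ∧ (ξ > 4 / 5 → ξ ≥ 9 / 11) := by
  have h6 := key 6 (by norm_num)
  have h7 := key 7 (by norm_num)
  have h8 := key 8 (by norm_num)
  have h9 := key 9 (by norm_num)
  have h10 := key 10 (by norm_num)
  push_cast at h6 h7 h8 h9 h10
  have c6 : (1 : ℝ) ≤ (⌈((6:ℝ) - 5) * ξ⌉ : ℝ) := by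
    have := ceil_ge_of_lt (((6:ℝ) - 5) * ξ) 1 (by push_cast; linarith)
    exact_mod_cast this
  have s1 : ξ ≥ 5 / 7 := by linarith
  have c7 : (2 : ℝ) ≤ (⌈((7:ℝ) - 5) * ξ⌉ : ℝ) := by
    have := ceil_ge_of_lt (((7:ℝ) - 5) * ξ) 2 (by push_cast; linarith)
    exact_mod_cast this
  have s2 : ξ ≥ 3 / 4 := by linarith
  have c8 : (3 : ℝ) ≤ (⌈((8:ℝ) - 5) * ξ⌉ : ℝ) := by
    have := ceil_ge_of_lt (((8:ℝ) - 5) * ξ) 3 (by push_cast; linarith)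
    exact_mod_cast this
  have s3 : ξ ≥ 7 / 9 := by linarith
  have c9 : (4 : ℝ) ≤ (⌈((9:ℝ) - 5) * ξ⌉ : ℝ) := by
    have := ceil_ge_of_lt (((9:ℝ) - 5) * ξ) 4 (by push_cast; linarith)
    exact_mod_cast this
  have s4 : ξ ≥ 4 / 5 := by linarith
  refine ⟨s4, fun hgt => ?_⟩
  have c10 : (5 : ℝ) ≤ (⌈((10:ℝ) - 5) * ξ⌉ : ℝ) := by
    have := ceil_ge_of_lt (((10:ℝ) - 5) * ξ) 5 (by push_cast; linarith)
    exact_mod_cast this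
  linarith
end

section
/- Let η be a real number with η ≥ 16/7 such that for every integer n ≥ 8 one has (n + 1)·η ≥ ⌈(n − 6)·η⌉ + 16, where ⌈·⌉ denotes the ceiling function. Then η ≥ 12/5. -/
/-- Numerical content of Case IVa of the proof of Proposition 4.14: if
`η ≥ 16/7` and `(n + 1) * η ≥ ⌈(n − 6) * η⌉ + 16` for every integer `n ≥ 8`,
then `η ≥ 12/5`. -/
theorem stmt9 (η : ℝ) (hη : η ≥ 16 / 7)
    (key : ∀ n : ℕ, 8 ≤ n →
      ((n : ℝ) + 1) * η ≥ (⌈((n : ℝ) - 6) * η⌉ : ℝ) + 16) :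
    η ≥ 12 / 5 := by
  have h8 := key 8 (by norm_num)
  have h10 := key 10 (by norm_num)
  have h9 := key 9 (by norm_num)
  norm_num at h8 h10 h9
  -- step 1: η ≥ 7/3
  have c8 : (4 : ℤ) < ⌈2 * η⌉ := by
    rw [Int.lt_ceil]; push_cast; linarith
  have c8' : (5 : ℝ) ≤ (⌈2 * η⌉ : ℝ) := by exact_mod_cast c8
  have h1 : η ≥ 7 / 3 := by linarith
  -- step 2: η ≥ 26/11
  have c10 : (9 : ℤ) < ⌈4 * η⌉ := by
    rw [Int.lt_ceil]; push_cast; linarith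
  have c10' : (10 : ℝ) ≤ (⌈4 * η⌉ : ℝ) := by exact_mod_cast c10
  have h2 : η ≥ 26 / 11 := by linarith
  -- step 3
  have c9 : (7 : ℤ) < ⌈3 * η⌉ := by
    rw [Int.lt_ceil]; push_cast; linarith
  have c9' : (8 : ℝ) ≤ (⌈3 * η⌉ : ℝ) := by exact_mod_cast c9
  linarith
end

section
/- Let ξ, μ, β be real numbers with ξ > 2/3, μ ≥ 7/6 and β ≥ 7/13, satisfying the key inequality: for every positive integer m with (m − 1 − 1/μ − 1/β)·ξ > 1 one has m·ξ ≥ ⌈(m − 1 − 1/μ − 1/β)·ξ⌉ + 2. Then ξ ≥ 5/7 and μ·β·ξ ≥ 35/78. -/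
/-- Numerical argument proving statement (2) of Proposition 4.14: under the key
inequality, from `ξ > 2/3`, `μ ≥ 7/6` and `β ≥ 7/13` one deduces `ξ ≥ 5/7` and
`μ * β * ξ ≥ 35/78`. -/
theorem stmt17 (ξ μ β : ℝ) (hξ : ξ > 2 / 3) (hμ : μ ≥ 7 / 6) (hβ : β ≥ 7 / 13)
    (key : ∀ m : ℕ, 0 < m → ((m : ℝ) - 1 - 1 / μ - 1 / β) * ξ > 1 →
      (m : ℝ) * ξ ≥ (⌈((m : ℝ) - 1 - 1 / μ - 1 / β) * ξ⌉ : ℝ) + 2) :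
    ξ ≥ 5 / 7 ∧ μ * β * ξ ≥ 35 / 78 := by
  have hμ0 : (0:ℝ) < μ := by linarith
  have hβ0 : (0:ℝ) < β := by linarith
  have h1μ : 1 / μ ≤ 6 / 7 := by
    rw [div_le_div_iff₀ hμ0 (by norm_num)]; linarith
  have h1β : 1 / β ≤ 13 / 7 := by
    rw [div_le_div_iff₀ hβ0 (by norm_num)]; linarith
  have hx2 : (((7:ℕ):ℝ) - 1 - 1 / μ - 1 / β) * ξ > 2 := by
    push_cast
    nlinarith
  have h7 := key 7 (by norm_num) (by linarith)
  have hceil : (3:ℤ) ≤ ⌈(((7:ℕ):ℝ) - 1 - 1 / μ - 1 / β) * ξ⌉ := by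
    have := Int.lt_ceil.mpr (show ((2:ℤ):ℝ) < (((7:ℕ):ℝ) - 1 - 1 / μ - 1 / β) * ξ by
      push_cast; linarith)
    omega
  have hceilR : (3:ℝ) ≤ (⌈(((7:ℕ):ℝ) - 1 - 1 / μ - 1 / β) * ξ⌉ : ℝ) := by
    exact_mod_cast hceil
  have hξ57 : ξ ≥ 5 / 7 := by
    set c : ℝ := (⌈(((7:ℕ):ℝ) - 1 - 1 / μ - 1 / β) * ξ⌉ : ℝ) with hc
    have : ((7:ℕ):ℝ) * ξ ≥ 5 := by linarith [h7, hceilR]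
    push_cast at this
    linarith
  refine ⟨hξ57, ?_⟩
  nlinarith [mul_pos hμ0 hβ0, mul_le_mul hμ hβ (by norm_num) (le_of_lt hμ0)]
end
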